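/- Let S be a numerical semigroup, k ∈ ℕ and j ∈ {1, ..., m(S)−1}. Then the interval I_k contains at least j elements of S if and only if w_{j−1} < (k+1)·m, where m = m(S). -/

import Mathlib

/-- A numerical semigroup: an additive submonoid of `ℕ` (containing `0`, closed under
addition) whose complement in `ℕ` is finite. -/
structure NumericalSemigroup where
  carrier : Set ℕ
  zero_mem : 0 ∈ carrier
  add_mem : ∀ ⦃a b : ℕ⦄, a ∈ carrier → b ∈ carrier → a + b ∈ carrier
  cofinite : (carrierᶜ : Set ℕ).Finite

namespace NumericalSemigroup

/-- The multiplicity `m(S)`: the smallest positive element of `S`. -/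
noncomputable def mult (S : NumericalSemigroup) : ℕ :=
  sInf {s : ℕ | s ∈ S.carrier ∧ 0 < s}

/-- The embedding dimension `ν(S)`: the cardinality of the (unique) minimal system of
generators of `S`, i.e. the least cardinality of a generating set. -/
noncomputable def embdim (S : NumericalSemigroup) : ℕ :=
  sInf {n : ℕ | ∃ G : Finset ℕ,
    S.carrier = (AddSubmonoid.closure (G : Set ℕ) : Set ℕ) ∧ G.card = n}

/-- The Frobenius number `f(S)`: the largest integer not belonging to `S`. -/
noncomputable def frob (S : NumericalSemigroup) : ℤ :=
  sSup {x : ℤ | ∀ s ∈ S.carrier, (s : ℤ) ≠ x}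

/-- `n(S)`: the number of elements of `S` smaller than the Frobenius number. -/
noncomputable def small (S : NumericalSemigroup) : ℕ :=
  {s : ℕ | s ∈ S.carrier ∧ (s : ℤ) < S.frob}.ncard

/-- The type `t(S)`: the number of pseudo-Frobenius numbers of `S`, i.e. integers
`x ∉ S` such that `x + s ∈ S` for every nonzero `s ∈ S`. -/
noncomputable def typ (S : NumericalSemigroup) : ℕ :=
  {x : ℤ | (∀ s ∈ S.carrier, (s : ℤ) ≠ x) ∧
    ∀ s ∈ S.carrier, 0 < s → ∃ u ∈ S.carrier, (u : ℤ) = x + s}.ncard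

/-- The `k`-th interval `I_k = [k·m, (k+1)·m - 1]` (for a given `m`). -/
def interval (m k : ℕ) : Set ℕ := Set.Ico (k * m) ((k + 1) * m)

/-- `n_k`: the number of elements of `S ∩ I_k` smaller than the Frobenius number. -/
noncomputable def nk (S : NumericalSemigroup) (k : ℕ) : ℕ :=
  {s : ℕ | s ∈ S.carrier ∩ interval S.mult k ∧ (s : ℤ) < S.frob}.ncard

/-- `L = ⌊f(S)/m(S)⌋`. -/
noncomputable def Lindex (S : NumericalSemigroup) : ℤ := S.frob / (S.mult : ℤ)

/-- `ρ = f(S) + 1 - L·m(S)`. -/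
noncomputable def rho (S : NumericalSemigroup) : ℤ :=
  S.frob + 1 - S.Lindex * (S.mult : ℤ)

/-- The Apéry set `Ap(S) = {w ∈ S : w - m(S) ∉ S}`. -/
def apery (S : NumericalSemigroup) : Set ℕ :=
  {w : ℕ | w ∈ S.carrier ∧ ∀ u ∈ S.carrier, u + S.mult ≠ w}

theorem apery_finite (S : NumericalSemigroup) : S.apery.Finite := by
  apply Set.Finite.subset ((Set.finite_Iio S.mult).union (S.cofinite.image (· + S.mult)))
  intro x hx
  by_cases h : x < S.mult
  · exact Or.inl h
  · refine Or.inr ⟨x - S.mult, fun hmem => hx.2 _ hmem (by omega), ?_⟩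
    show x - S.mult + S.mult = x
    omega

/-- `w j`: the `(j+1)`-st smallest element of the Apéry set, so that
`Ap(S) = {w 0 < w 1 < ... < w (m-1)}` with `w 0 = 0`. -/
noncomputable def w (S : NumericalSemigroup) (j : ℕ) : ℕ :=
  (S.apery_finite.toFinset.sort (· ≤ ·)).getD j 0

/-- `ε_j`: the number of `k ∈ {0, ..., L-1}` such that `|I_k ∩ S| = j`. -/
noncomputable def eps (S : NumericalSemigroup) (j : ℕ) : ℕ :=
  {k : ℕ | (k : ℤ) < S.Lindex ∧ (S.carrier ∩ interval S.mult k).ncard = j}.ncard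

/-- `η_j`: the number of `k ∈ ℕ` such that `|I_k ∩ S| = j`. -/
noncomputable def eta (S : NumericalSemigroup) (j : ℕ) : ℕ :=
  {k : ℕ | (S.carrier ∩ interval S.mult k).ncard = j}.ncard

lemma mult_spec (S : NumericalSemigroup) : S.mult ∈ S.carrier ∧ 0 < S.mult := by
  have hne : {s : ℕ | s ∈ S.carrier ∧ 0 < s}.Nonempty := by
    have hinf : S.carrier.Infinite := by
      have := S.cofinite.infinite_compl
      rwa [compl_compl] at this
    obtain ⟨x, hx, hx1⟩ := hinf.exists_gt 0
    exact ⟨x, hx, hx1⟩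
  exact Nat.sInf_mem hne

lemma mem_add_mul (S : NumericalSemigroup) (a t : ℕ) (ha : a ∈ S.carrier) :
    a + S.mult * t ∈ S.carrier := by
  induction t with
  | zero => simpa using ha
  | succ n ih =>
    have := S.add_mem ih S.mult_spec.1
    have he : a + S.mult * n + S.mult = a + S.mult * (n + 1) := by ring
    rwa [he] at this

lemma mem_of_le_of_mod (S : NumericalSemigroup) {a x : ℕ} (ha : a ∈ S.carrier)
    (hle : a ≤ x) (hmod : a % S.mult = x % S.mult) : x ∈ S.carrier := by
  have hd : S.mult ∣ x - a := (Nat.modEq_iff_dvd' hle).mp hmod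
  obtain ⟨t, ht⟩ := hd
  have hx : x = a + S.mult * t := by omega
  rw [hx]
  exact S.mem_add_mul a t ha

lemma exists_apery_le (S : NumericalSemigroup) :
    ∀ x, x ∈ S.carrier → ∃ a ∈ S.apery, a ≤ x ∧ a % S.mult = x % S.mult := by
  intro x
  induction x using Nat.strong_induction_on with
  | _ x ih =>
    intro hx
    by_cases h : ∃ u ∈ S.carrier, u + S.mult = x
    · obtain ⟨u, hu, hux⟩ := h
      have hm := S.mult_spec.2
      obtain ⟨a, ha, hle, hmod⟩ := ih u (by omega) hu
      refine ⟨a, ha, by omega, ?_⟩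
      rw [hmod, ← hux, Nat.add_mod_right]
    · exact ⟨x, ⟨hx, fun u hu hne => h ⟨u, hu, hne⟩⟩, le_rfl, rfl⟩

lemma apery_mod_inj (S : NumericalSemigroup) {a b : ℕ} (ha : a ∈ S.apery) (hb : b ∈ S.apery)
    (h : a % S.mult = b % S.mult) : a = b := by
  wlog hab : a ≤ b generalizing a b
  · exact (this hb ha h.symm (by omega)).symm
  rcases Nat.eq_or_lt_of_le hab with h1 | h1
  · exact h1
  exfalso
  have hd : S.mult ∣ b - a := (Nat.modEq_iff_dvd' hab).mp h
  obtain ⟨t, ht⟩ := hd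
  have hmt : 0 < S.mult * t := by omega
  obtain ⟨t', rfl⟩ : ∃ t', t = t' + 1 := by
    rcases Nat.eq_zero_or_pos t with h0 | h0
    · subst h0; simp at hmt
    · exact ⟨t - 1, by omega⟩
  have hmem : a + S.mult * t' ∈ S.carrier := S.mem_add_mul a t' ha.1
  refine hb.2 _ hmem ?_
  have h5 : S.mult * (t' + 1) = S.mult * t' + S.mult := by ring
  omega

lemma inter_interval_eq_image (S : NumericalSemigroup) (k : ℕ) :
    S.carrier ∩ interval S.mult k =
      (fun a => k * S.mult + a % S.mult) '' {a ∈ S.apery | a < (k + 1) * S.mult} := by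
  have hm := S.mult_spec.2
  have hkk : (k + 1) * S.mult = k * S.mult + S.mult := by ring
  ext x
  constructor
  · rintro ⟨hxS, hx1, hx2⟩
    obtain ⟨a, ha, hle, hmod⟩ := S.exists_apery_le x hxS
    refine ⟨a, ⟨ha, by omega⟩, ?_⟩
    have hx : x = (x - k * S.mult) + k * S.mult := by omega
    have hr : x % S.mult = x - k * S.mult := by
      conv_lhs => rw [hx]
      rw [Nat.add_mul_mod_self_right]
      exact Nat.mod_eq_of_lt (by omega)
    show k * S.mult + a % S.mult = x
    omega
  · rintro ⟨a, ⟨ha, haB⟩, rfl⟩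
    show k * S.mult + a % S.mult ∈ S.carrier ∩ interval S.mult k
    have hx : a % S.mult = (k * S.mult + a % S.mult) % S.mult := by
      rw [Nat.add_comm, Nat.add_mul_mod_self_right]
      exact (Nat.mod_mod_of_dvd a dvd_rfl).symm
    have hdiv : a / S.mult ≤ k := by
      by_contra hc
      push_neg at hc
      have h1 := Nat.div_mul_le_self a S.mult
      have h2 : (k + 1) * S.mult ≤ (a / S.mult) * S.mult :=
        Nat.mul_le_mul_right _ hc
      omega
    have hle : a ≤ k * S.mult + a % S.mult := by
      have h1 := Nat.div_add_mod a S.mult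
      have h2 : S.mult * (a / S.mult) ≤ S.mult * k := Nat.mul_le_mul_left _ hdiv
      have h3 : S.mult * k = k * S.mult := by ring
      omega
    have hmlt : a % S.mult < S.mult := Nat.mod_lt _ hm
    exact ⟨S.mem_of_le_of_mod ha.1 hle hx, Set.mem_Ico.mpr ⟨by omega, by omega⟩⟩

lemma mult_le_card_apery (S : NumericalSemigroup) :
    S.mult ≤ S.apery_finite.toFinset.card := by
  have hm := S.mult_spec.2
  obtain ⟨N, hN⟩ := S.cofinite.bddAbove
  have H : ∀ r : ℕ, ∃ a, (r < S.mult → a ∈ S.apery ∧ a % S.mult = r) := by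
    intro r
    by_cases hr : r < S.mult
    · have hx : r + S.mult * (N + 1) ∈ S.carrier := by
        by_contra hc
        have := hN hc
        nlinarith
      obtain ⟨a, ha, hle, hmod⟩ := S.exists_apery_le _ hx
      refine ⟨a, fun _ => ⟨ha, ?_⟩⟩
      rw [hmod]
      rw [Nat.add_mul_mod_self_left, Nat.mod_eq_of_lt hr]
    · exact ⟨0, fun h => absurd h hr⟩
  choose f hf using H
  have : (Finset.range S.mult).card ≤ S.apery_finite.toFinset.card := by
    apply Finset.card_le_card_of_injOn f
    · intro r hr
      rw [Finset.mem_coe, Set.Finite.mem_toFinset]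
      exact (hf r (Finset.mem_range.mp hr)).1
    · intro r hr r' hr' hrr
      have h1 := hf r (Finset.mem_range.mp hr)
      have h2 := hf r' (Finset.mem_range.mp hr')
      rw [← h1.2, ← h2.2, hrr]
  simpa using this

lemma list_key (l : List ℕ) (hl : l.Pairwise (· < ·)) (B j : ℕ) (hj1 : 1 ≤ j)
    (hj : j - 1 < l.length) :
    j ≤ (l.filter (· < B)).length ↔ l.getD (j - 1) 0 < B := by
  have hpw : ∀ i i' : ℕ, (hi : i < l.length) → (hi' : i' < l.length) → i < i' →
      l[i] < l[i'] := by
    intro i i' hi hi' hlt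
    exact List.pairwise_iff_getElem.mp hl i i' hi hi' hlt
  rw [List.getD_eq_getElem l 0 hj]
  constructor
  · intro h
    by_contra hc
    push_neg at hc
    have hdrop : (l.drop (j - 1)).filter (· < B) = [] := by
      rw [List.filter_eq_nil_iff]
      intro x hx
      obtain ⟨i, hi, hix⟩ := List.mem_iff_getElem.mp hx
      have hi0 : i < l.length - (j - 1) := by simpa using hi
      have hi' : j - 1 + i < l.length := by omega
      have hix' : l[j - 1 + i]'hi' = x := by
        rw [List.getElem_drop']
        exact hix
      have hge : l[j - 1] ≤ l[j - 1 + i]'hi' := by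
        rcases Nat.eq_zero_or_pos i with h0 | h0
        · subst h0; simp
        · exact le_of_lt (hpw _ _ hj hi' (by omega))
      simp only [decide_eq_true_eq]
      omega
    have hsplit : l = l.take (j - 1) ++ l.drop (j - 1) := (List.take_append_drop _ _).symm
    rw [hsplit, List.filter_append, List.length_append, hdrop] at h
    simp at h
    have : (List.filter (· < B) (l.take (j - 1))).length ≤ j - 1 := by
      calc (List.filter (· < B) (l.take (j - 1))).length ≤ (l.take (j - 1)).length :=
        List.length_filter_le _ _
      _ ≤ j - 1 := by simp
    omega
  · intro h
    have htake : (l.take j).filter (· < B) = l.take j := by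
      rw [List.filter_eq_self]
      intro x hx
      obtain ⟨i, hi, hix⟩ := List.mem_iff_getElem.mp hx
      have hilen : i < j := by
        have := List.length_take_le j l
        omega
      have hi' : i < l.length := by
        have := hi
        simp [List.length_take] at this
        omega
      rw [List.getElem_take] at hix
      have hle : l[i] ≤ l[j - 1] := by
        rcases Nat.lt_or_ge i (j - 1) with h0 | h0
        · exact le_of_lt (hpw _ _ hi' hj h0)
        · have hieq : i = j - 1 := by omega
          exact le_of_eq (by congr 1)
      simp only [decide_eq_true_eq]
      omega
    have hsplit : l = l.take j ++ l.drop j := (List.take_append_drop _ _).symm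
    conv_rhs => rw [hsplit]
    rw [List.filter_append, List.length_append, htake]
    have : (l.take j).length = j := by
      rw [List.length_take]
      omega
    omega

/-- For `k ∈ ℕ` and `j ∈ {1, ..., m-1}`, the interval `I_k` contains at
least `j` elements of `S` iff `w_{j-1} < (k+1)·m`. -/
theorem le_ncard_inter_iff (S : NumericalSemigroup)
    (k j : ℕ) (hj1 : 1 ≤ j) (hj2 : j ≤ S.mult - 1) :
    j ≤ (S.carrier ∩ interval S.mult k).ncard ↔ S.w (j - 1) < (k + 1) * S.mult := by
  classical
  have hm := S.mult_spec.2
  set B := (k + 1) * S.mult with hB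
  set A := S.apery_finite.toFinset with hA
  set l := A.sort (· ≤ ·) with hl
  have hlen : S.mult ≤ l.length := by
    rw [hl, Finset.length_sort]
    exact S.mult_le_card_apery
  have hm2 : 2 ≤ S.mult := by
    by_contra hc
    omega
  -- step 1: ncard of intersection equals card of filtered apery finset
  have hinj : Set.InjOn (fun a => k * S.mult + a % S.mult) {a ∈ S.apery | a < B} := by
    intro a ⟨ha, _⟩ b ⟨hb, _⟩ hab
    apply S.apery_mod_inj ha hb
    simpa using hab
  have h1 : (S.carrier ∩ interval S.mult k).ncard = {a ∈ S.apery | a < B}.ncard := by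
    rw [S.inter_interval_eq_image k, Set.ncard_image_of_injOn hinj]
  have hsetF : {a ∈ S.apery | a < B} = ↑(A.filter (· < B)) := by
    ext a
    simp [hA, Set.Finite.mem_toFinset]
  have h2 : {a ∈ S.apery | a < B}.ncard = (A.filter (· < B)).card := by
    rw [hsetF, Set.ncard_coe_finset]
  -- step 2: card of filtered finset equals length of filtered sorted list
  have hnd : l.Nodup := A.sort_nodup _
  have h3 : (A.filter (· < B)).card = (l.filter (· < B)).length := by
    have hfin : (l.filter (· < B)).toFinset = A.filter (· < B) := by
      ext a
      simp [List.mem_filter, hl, Finset.mem_sort]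
    rw [← hfin, List.toFinset_card_of_nodup (hnd.filter _)]
  rw [h1, h2, h3]
  have hsorted : l.Pairwise (· < ·) := A.sortedLT_sort.pairwise
  have := list_key l hsorted B j hj1 (by omega)
  rw [this]
  rfl

end NumericalSemigroup
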